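/- arXiv:1201.3486 — 3 statements merged into one kernel-verified Lean document; each statement's English description precedes it below -/
import Mathlib

section
/- Let $n = p+q$ with $p>1$, $q\geq 1$, $R>0$, and let $w:[0,R]\to[0,\infty)$ be a $C^1$ function with $w(R)=0$. Set $K := \left(\int_0^R |w'(\tau)|^p \tau^{n-1-q}\,d\tau\right)^{1/p}$ and assume $K>0$. Then for every $s\in(0,R)$, $w(s) \leq K \left(\ln(R/s)\right)^{1/p'}$ where $p'=p/(p-1)$; consequently $\int_0^R \exp\left\{ (w(s)/K)^{p'} \right\} s^{n-1}\,ds \leq \frac{R^n}{n-1}$. -/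
open Real MeasureTheory Set intervalIntegral

/-- Critical case `n = p + q` (Moser–Trudinger type): logarithmic pointwise bound
and exponential integral bound for a `C¹` profile `w` on `[0,R]` with `w R = 0`. -/
theorem stmt1 (n p q R K : ℝ) (hp : 1 < p) (hq : 1 ≤ q) (hn : n = p + q)
    (hR : 0 < R) (w : ℝ → ℝ) (hw : ContDiffOn ℝ 1 w (Set.Icc 0 R))
    (hwpos : ∀ t ∈ Set.Icc (0 : ℝ) R, 0 ≤ w t) (hwR : w R = 0)
    (hK : K = (∫ τ in (0 : ℝ)..R,
      |derivWithin w (Set.Icc 0 R) τ| ^ p * τ ^ (n - 1 - q)) ^ (1 / p))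
    (hKpos : 0 < K) :
    (∀ s ∈ Set.Ioo (0 : ℝ) R,
      w s ≤ K * (Real.log (R / s)) ^ (1 / (p / (p - 1)))) ∧
    (∫ s in (0 : ℝ)..R, Real.exp ((w s / K) ^ (p / (p - 1))) * s ^ (n - 1)) ≤
      R ^ n / (n - 1) := by
  have hp0 : (0:ℝ) < p := lt_trans one_pos hp
  have hp1 : (0:ℝ) < p - 1 := sub_pos.2 hp
  set p' : ℝ := p / (p - 1) with hp'def
  have hp'pos : 0 < p' := div_pos hp0 hp1
  have hpq : p.HolderConjugate p' := Real.HolderConjugate.conjExponent hp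
  set g : ℝ → ℝ := fun τ => derivWithin w (Set.Icc 0 R) τ with hgdef
  have hudiff : UniqueDiffOn ℝ (Set.Icc (0:ℝ) R) := uniqueDiffOn_Icc hR
  have hgc : ContinuousOn g (Set.Icc 0 R) := hw.continuousOn_derivWithin hudiff le_rfl
  have hwc : ContinuousOn w (Set.Icc 0 R) := hw.continuousOn
  have hexp : n - 1 - q = p - 1 := by rw [hn]; ring
  rw [hexp] at hK
  set a : ℝ := (p - 1) / p with hadef
  have ha0 : 0 ≤ a := by positivity
  have hap : a * p = p - 1 := div_mul_cancel₀ _ hp0.ne'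
  have hap' : a * p' = 1 := by
    rw [hadef, hp'def]; field_simp
  -- the weighted integrand is continuous on [0,R]
  have hFc : ContinuousOn (fun τ => |g τ| ^ p * τ ^ (p - 1)) (Set.Icc 0 R) := by
    apply ContinuousOn.mul
    · exact hgc.abs.rpow_const (fun x _ => Or.inr hp0.le)
    · exact continuousOn_id.rpow_const (fun x _ => Or.inr hp1.le)
  set I : ℝ := ∫ τ in (0:ℝ)..R, |g τ| ^ p * τ ^ (p - 1) with hIdef
  have hInonneg : 0 ≤ I := by
    apply intervalIntegral.integral_nonneg hR.le
    intro τ hτ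
    have := Real.rpow_nonneg (abs_nonneg (g τ)) p
    have := Real.rpow_nonneg hτ.1 (p-1)
    positivity
  have hIioc : I = ∫ τ in Set.Ioc (0:ℝ) R, |g τ| ^ p * τ ^ (p - 1) :=
    intervalIntegral.integral_of_le hR.le
  have hIint : IntegrableOn (fun τ => |g τ| ^ p * τ ^ (p - 1)) (Set.Ioc 0 R) volume :=
    (hFc.integrableOn_Icc).mono_set Set.Ioc_subset_Icc_self
  -- main pointwise bound
  have hmain : ∀ s ∈ Set.Ioo (0:ℝ) R, w s ≤ K * (Real.log (R / s)) ^ (1 / p') := by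
    intro s hs
    have hsub : Set.Icc s R ⊆ Set.Icc 0 R := Set.Icc_subset_Icc hs.1.le le_rfl
    have hgint : IntervalIntegrable g volume s R := (hgc.mono hsub).intervalIntegrable_of_Icc hs.2.le
    have hftc : ∫ τ in s..R, g τ = w R - w s := by
      apply intervalIntegral.integral_eq_sub_of_hasDeriv_right_of_le hs.2.le (hwc.mono hsub) ?_ hgint
      intro x hx
      have hxI : x ∈ Set.Ioo (0:ℝ) R := ⟨hs.1.trans hx.1, hx.2⟩
      have hd : HasDerivWithinAt w (g x) (Set.Icc 0 R) x :=
        (hw.differentiableOn one_ne_zero x ⟨hxI.1.le, hxI.2.le⟩).hasDerivWithinAt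
      exact (hd.hasDerivAt (Icc_mem_nhds hxI.1 hxI.2)).hasDerivWithinAt
    have h1 : w s ≤ ∫ τ in s..R, |g τ| := by
      have : w s = -∫ τ in s..R, g τ := by rw [hftc, hwR]; ring
      calc w s = -∫ τ in s..R, g τ := this
        _ ≤ |∫ τ in s..R, g τ| := neg_le_abs _
        _ ≤ ∫ τ in s..R, |g τ| := intervalIntegral.abs_integral_le_integral_abs hs.2.le
    set μ := volume.restrict (Set.Ioc s R) with hμ
    haveI : IsFiniteMeasure μ := ⟨by rw [Measure.restrict_apply_univ]; exact measure_Ioc_lt_top⟩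
    set F : ℝ → ℝ := fun τ => |g τ| * τ ^ a with hFdef
    set G : ℝ → ℝ := fun τ => τ ^ (-a) with hGdef
    have hFcont : ContinuousOn F (Set.Icc s R) :=
      ((hgc.mono hsub).abs).mul (continuousOn_id.rpow_const fun x _ => Or.inr ha0)
    have hGcont : ContinuousOn G (Set.Icc s R) :=
      continuousOn_id.rpow_const fun x hx => Or.inl (ne_of_gt (lt_of_lt_of_le hs.1 hx.1))
    have memhelper : ∀ (f : ℝ → ℝ) (e : ENNReal), ContinuousOn f (Set.Icc s R) → MemLp f e μ := by
      intro f e hf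
      obtain ⟨C, hC⟩ := isCompact_Icc.exists_bound_of_continuousOn hf
      refine MemLp.of_bound ((hf.mono Set.Ioc_subset_Icc_self).aestronglyMeasurable
        measurableSet_Ioc) C ?_
      exact (ae_restrict_iff' measurableSet_Ioc).2
        (Filter.Eventually.of_forall fun x hx => hC x (Set.Ioc_subset_Icc_self hx))
    have hFnn : 0 ≤ᵐ[μ] F := (ae_restrict_iff' measurableSet_Ioc).2
      (Filter.Eventually.of_forall fun x hx =>
        mul_nonneg (abs_nonneg _) (Real.rpow_nonneg (hs.1.trans hx.1).le _))
    have hGnn : 0 ≤ᵐ[μ] G := (ae_restrict_iff' measurableSet_Ioc).2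
      (Filter.Eventually.of_forall fun x hx => Real.rpow_nonneg (hs.1.trans hx.1).le _)
    have hholder := MeasureTheory.integral_mul_le_Lp_mul_Lq_of_nonneg (μ := μ) hpq
      hFnn hGnn (memhelper F _ hFcont) (memhelper G _ hGcont)
    have habs : ∫ τ in s..R, |g τ| = ∫ τ, F τ * G τ ∂μ := by
      rw [intervalIntegral.integral_of_le hs.2.le, hμ]
      refine setIntegral_congr_fun measurableSet_Ioc fun τ hτ => ?_
      have hτ0 : 0 < τ := hs.1.trans hτ.1
      rw [hFdef, hGdef]
      simp only
      rw [mul_assoc, ← Real.rpow_add hτ0, add_neg_cancel, Real.rpow_zero, mul_one]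
    -- first factor
    have hA : ∫ τ, F τ ^ p ∂μ = ∫ τ in Set.Ioc s R, |g τ| ^ p * τ ^ (p - 1) := by
      refine setIntegral_congr_fun measurableSet_Ioc fun τ hτ => ?_
      have hτ0 : (0:ℝ) ≤ τ := (hs.1.trans hτ.1).le
      rw [hFdef]
      simp only
      rw [Real.mul_rpow (abs_nonneg _) (Real.rpow_nonneg hτ0 _), ← Real.rpow_mul hτ0, hap]
    have hAle : ∫ τ, F τ ^ p ∂μ ≤ I := by
      rw [hA, hIioc]
      refine setIntegral_mono_set hIint ?_ (HasSubset.Subset.eventuallyLE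
        (Set.Ioc_subset_Ioc_left hs.1.le)) 
      refine (ae_restrict_iff' measurableSet_Ioc).2 (Filter.Eventually.of_forall fun x hx => ?_)
      have := Real.rpow_nonneg (abs_nonneg (g x)) p
      have := Real.rpow_nonneg hx.1.le (p-1)
      positivity
    have hAnn : 0 ≤ ∫ τ, F τ ^ p ∂μ := by
      refine integral_nonneg_of_ae ?_
      filter_upwards [hFnn] with x hx
      exact Real.rpow_nonneg hx _
    have hfac1 : (∫ τ, F τ ^ p ∂μ) ^ (1/p) ≤ K := by
      rw [hK]
      exact Real.rpow_le_rpow hAnn hAle (by positivity)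
    -- second factor
    have hB : ∫ τ, G τ ^ p' ∂μ = Real.log (R / s) := by
      have : ∫ τ, G τ ^ p' ∂μ = ∫ τ in Set.Ioc s R, τ⁻¹ := by
        refine setIntegral_congr_fun measurableSet_Ioc fun τ hτ => ?_
        have hτ0 : (0:ℝ) ≤ τ := (hs.1.trans hτ.1).le
        rw [hGdef]
        simp only
        rw [← Real.rpow_mul hτ0, neg_mul, hap', Real.rpow_neg_one]
      rw [this, ← intervalIntegral.integral_of_le hs.2.le, integral_inv_of_pos hs.1 hR]
    have hlognn : 0 ≤ Real.log (R / s) :=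
      Real.log_nonneg ((one_le_div hs.1).2 hs.2.le)
    calc w s ≤ ∫ τ in s..R, |g τ| := h1
      _ = ∫ τ, F τ * G τ ∂μ := habs
      _ ≤ (∫ τ, F τ ^ p ∂μ) ^ (1/p) * (∫ τ, G τ ^ p' ∂μ) ^ (1/p') := hholder
      _ ≤ K * (Real.log (R / s)) ^ (1/p') := by
          rw [hB]
          exact mul_le_mul_of_nonneg_right hfac1 (Real.rpow_nonneg hlognn _)
  refine ⟨hmain, ?_⟩
  -- part 2
  have hn2 : (0:ℝ) < n - 2 := by rw [hn]; linarith
  have hn1 : (0:ℝ) < n - 1 := by linarith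
  have hpt : ∀ s ∈ Set.Icc (0:ℝ) R,
      Real.exp ((w s / K) ^ p') * s ^ (n - 1) ≤ R * s ^ (n - 2) := by
    intro s hs
    rcases eq_or_lt_of_le hs.1 with h0 | h0
    · rw [← h0, Real.zero_rpow hn1.ne', Real.zero_rpow hn2.ne', mul_zero, mul_zero]
    rcases eq_or_lt_of_le hs.2 with hR' | hR'
    · rw [hR', hwR, zero_div, Real.zero_rpow hp'pos.ne', Real.exp_zero, one_mul]
      have heq : R * R ^ (n - 2) = R ^ (n - 1) := by
        rw [show n - 1 = 1 + (n - 2) by ring, Real.rpow_add hR, Real.rpow_one]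
      exact heq.ge
    · have hws : 0 ≤ w s := hwpos s hs
      have hle : w s / K ≤ (Real.log (R / s)) ^ (1/p') :=
        (div_le_iff₀' hKpos).2 (hmain s ⟨h0, hR'⟩)
      have hlognn : 0 ≤ Real.log (R / s) := Real.log_nonneg ((one_le_div h0).2 hR'.le)
      have h2 : (w s / K) ^ p' ≤ Real.log (R / s) := by
        calc (w s / K) ^ p' ≤ ((Real.log (R / s)) ^ (1/p')) ^ p' :=
              Real.rpow_le_rpow (by positivity) hle hp'pos.le
          _ = Real.log (R / s) := by
              rw [← Real.rpow_mul hlognn, one_div_mul_cancel hp'pos.ne', Real.rpow_one]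
      have h3 : Real.exp ((w s / K) ^ p') ≤ R / s :=
        (Real.exp_log (div_pos hR h0)) ▸ Real.exp_le_exp.2 h2
      calc Real.exp ((w s / K) ^ p') * s ^ (n-1) ≤ (R / s) * s ^ (n-1) :=
            mul_le_mul_of_nonneg_right h3 (Real.rpow_nonneg h0.le _)
        _ = R * s ^ (n - 2) := by
            rw [div_mul_eq_mul_div, mul_div_assoc]
            congr 1
            have heq : s ^ (n - 1) = s ^ (n - 2) * s := by
              conv_lhs => rw [show n - 1 = n - 2 + 1 by ring]
              rw [Real.rpow_add h0, Real.rpow_one]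
            rw [heq, mul_div_cancel_right₀ _ h0.ne']
  have hcont1 : ContinuousOn (fun s => Real.exp ((w s / K) ^ p') * s ^ (n - 1))
      (Set.Icc 0 R) := by
    apply ContinuousOn.mul
    · exact Real.continuous_exp.comp_continuousOn
        ((hwc.div_const K).rpow_const fun x _ => Or.inr hp'pos.le)
    · exact continuousOn_id.rpow_const fun x _ => Or.inr hn1.le
  have hcont2 : ContinuousOn (fun s : ℝ => R * s ^ (n - 2)) (Set.Icc 0 R) :=
    continuousOn_const.mul (continuousOn_id.rpow_const fun x _ => Or.inr hn2.le)
  have hmono : (∫ s in (0:ℝ)..R, Real.exp ((w s / K) ^ p') * s ^ (n - 1)) ≤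
      ∫ s in (0:ℝ)..R, R * s ^ (n - 2) :=
    intervalIntegral.integral_mono_on hR.le (hcont1.intervalIntegrable_of_Icc hR.le)
      (hcont2.intervalIntegrable_of_Icc hR.le) hpt
  have hval : (∫ s in (0:ℝ)..R, R * s ^ (n - 2)) = R ^ n / (n - 1) := by
    rw [intervalIntegral.integral_const_mul, integral_rpow (Or.inl (by linarith))]
    have h21 : n - 2 + 1 = n - 1 := by ring
    rw [h21, Real.zero_rpow hn1.ne', sub_zero, mul_div_assoc']
    have heq : R * R ^ (n - 1) = R ^ n := by
      rw [show n = 1 + (n - 1) from by ring, Real.rpow_add hR, Real.rpow_one]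
      rw [show 1 + (n - 1) - 1 = n - 1 from by ring]
    rw [heq]
  calc (∫ s in (0:ℝ)..R, Real.exp ((w s / K) ^ p') * s ^ (n - 1)) ≤
        ∫ s in (0:ℝ)..R, R * s ^ (n - 2) := hmono
    _ = R ^ n / (n - 1) := hval
end

section
/- Let $n>3$, $\bar M > s > 0$, $C>0$, and let $\psi:[0,\bar M]\to(0,\infty)$ be continuous. Define $\eta:[0,\bar M]\to\mathbb{R}$ by $\eta(t)=t/s$ for $0\leq t\leq s$ and $\eta(t) = \exp\left(\frac{1}{\sqrt 2}\int_s^t \left(C\psi(\tau)^{-2/(n-1)}\right)^{1/2} d\tau\right)$ for $s< t\leq \bar M$. Suppose $C\int_0^{\bar M} \psi(t)^{(n-3)/(n-1)}\eta(t)^2\,dt \leq \int_0^{\bar M} \psi(t)\,\dot\eta(t)^2\,dt$. Then $\bar M - s \leq \left(\frac{2}{Cs^2}\int_0^s \psi(t)\,dt\cdot s^2\Big/ s^2 \right)^{1/(n-2)}\left(\sqrt{\tfrac2C}\,\frac{n-3}{2}\right)^{(n-3)/(n-2)}$, i.e., $\bar M - s \leq \left(\frac{2}{C}\int_0^{s}\frac{\psi(t)}{s^2}\,dt\right)^{1/(n-2)}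 \left(\sqrt{\tfrac2C}\,\frac{n-3}{2}\right)^{(n-3)/(n-2)}$. -/
open Real MeasureTheory Set intervalIntegral

set_option maxHeartbeats 1000000 in
/-- One-dimensional core of the critical case `n = p + 2` of the `L^∞` estimate
for stable solutions: the stability-type inequality with the explicit exponential
test function `η` bounds `M̄ - s`. -/
theorem stmt7 (n : ℝ) (hn : 3 < n) (M s C : ℝ) (hs : 0 < s) (hsM : s < M)
    (hC : 0 < C) (ψ : ℝ → ℝ) (hψc : ContinuousOn ψ (Set.Icc 0 M))
    (hψpos : ∀ t ∈ Set.Icc (0 : ℝ) M, 0 < ψ t)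
    (η : ℝ → ℝ)
    (hη : ∀ t, η t = if t ≤ s then t / s
      else Real.exp ((1 / Real.sqrt 2) *
        ∫ τ in s..t, Real.sqrt (C * ψ τ ^ (-(2 : ℝ) / (n - 1)))))
    (hstab : C * ∫ t in (0 : ℝ)..M, ψ t ^ ((n - 3) / (n - 1)) * η t ^ 2 ≤
      ∫ t in (0 : ℝ)..M, ψ t * (deriv η t) ^ 2) :
    M - s ≤ ((2 / C) * ∫ t in (0 : ℝ)..s, ψ t / s ^ 2) ^ ((1 : ℝ) / (n - 2)) *
      (Real.sqrt (2 / C) * (n - 3) / 2) ^ ((n - 3) / (n - 2)) := by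
  have hn1 : (0:ℝ) < n - 1 := by linarith
  have hn2 : (0:ℝ) < n - 2 := by linarith
  have hn3 : (0:ℝ) < n - 3 := by linarith
  set g : ℝ → ℝ := fun t => Real.sqrt (C * ψ t ^ (-(2:ℝ) / (n - 1))) with hgdef
  set E : ℝ → ℝ := fun t => Real.exp ((1 / Real.sqrt 2) * ∫ τ in s..t, g τ) with hEdef
  have hsub : Icc s M ⊆ Icc 0 M := Icc_subset_Icc (by linarith) le_rfl
  have hsub0 : Icc (0:ℝ) s ⊆ Icc 0 M := Icc_subset_Icc le_rfl (by linarith)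
  have hgc : ContinuousOn g (Icc 0 M) :=
    (continuousOn_const.mul (hψc.rpow_const fun t ht => Or.inl (hψpos t ht).ne')).sqrt
  have hgint : IntegrableOn g (Icc s M) := (hgc.mono hsub).integrableOn_Icc
  have hFc : ContinuousOn (fun t => ∫ τ in s..t, g τ) (Icc s M) := by
    have := intervalIntegral.continuousOn_primitive_interval (a := s) (b := M) (μ := volume)
      (f := g) (by rwa [uIcc_of_le hsM.le])
    rwa [uIcc_of_le hsM.le] at this
  have hEc : ContinuousOn E (Icc s M) :=
    Real.continuous_exp.comp_continuousOn (continuousOn_const.mul hFc)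
  have hηE : ∀ t ∈ Icc s M, η t = E t := by
    intro t ht
    rcases eq_or_lt_of_le ht.1 with h | h
    · rw [hη, if_pos h.ge, ← h]
      simp [hEdef, div_self hs.ne']
    · rw [hη, if_neg (not_le.2 h)]
  have hηcsM : ContinuousOn η (Icc s M) := hEc.congr hηE
  have hηpos : ∀ t ∈ Icc s M, 0 < η t := fun t ht => by
    rw [hηE t ht]; exact Real.exp_pos _
  have hη0s : ∀ t ∈ Icc 0 s, η t = t / s := fun t ht => by rw [hη, if_pos ht.2]
  have hηc0s : ContinuousOn η (Icc 0 s) :=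
    ((continuous_id.div_const s).continuousOn).congr hη0s
  have hηnn : ∀ t ∈ Icc 0 M, 0 ≤ η t := by
    intro t ht
    rcases le_total t s with h | h
    · rw [hη, if_pos h]; exact div_nonneg ht.1 hs.le
    · exact (hηpos t ⟨h, ht.2⟩).le
  -- derivative on (0, s)
  have hηd1 : ∀ t ∈ Ioo (0:ℝ) s, HasDerivAt η (1/s) t := by
    intro t ht
    have heq : (fun u => u / s) =ᶠ[nhds t] η := by
      filter_upwards [Iio_mem_nhds ht.2] with u hu
      rw [hη, if_pos (le_of_lt hu)]
    have : HasDerivAt (fun u : ℝ => u / s) (1/s) t := by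
      simpa using (hasDerivAt_id t).div_const s
    exact this.congr_of_eventuallyEq heq.symm
  -- derivative on (s, M)
  have hηd2 : ∀ t ∈ Ioo s M, HasDerivAt η (η t * ((1 / Real.sqrt 2) * g t)) t := by
    intro t ht
    have htmem : Icc (0:ℝ) M ∈ nhds t := Icc_mem_nhds (by linarith [ht.1]) ht.2
    have hFd : HasDerivAt (fun u => ∫ τ in s..u, g τ) (g t) t := by
      apply intervalIntegral.integral_hasDerivAt_right
      · apply ContinuousOn.intervalIntegrable
        apply hgc.mono
        rw [uIcc_of_le ht.1.le]
        exact Icc_subset_Icc (by linarith) ht.2.le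
      · exact ⟨Icc 0 M, htmem, hgc.aestronglyMeasurable measurableSet_Icc⟩
      · exact hgc.continuousAt htmem
    have hEd : HasDerivAt E (E t * ((1 / Real.sqrt 2) * g t)) t := by
      have h1 := (hFd.const_mul (1 / Real.sqrt 2)).exp
      simpa [hEdef, mul_comm, mul_assoc, mul_left_comm] using h1
    have heq : E =ᶠ[nhds t] η := by
      filter_upwards [Ioi_mem_nhds ht.1] with u hu
      rw [hη, if_neg (not_le.2 hu)]
    have := hEd.congr_of_eventuallyEq heq.symm
    rwa [← hηE t ⟨ht.1.le, ht.2.le⟩] at this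
  have hηs1 : η s = 1 := by
    rw [hη0s s ⟨hs.le, le_rfl⟩, div_self hs.ne']
  set w : ℝ → ℝ := fun t => ψ t ^ ((n - 3) / (n - 1)) with hwdef
  have hwc : ContinuousOn w (Icc 0 M) := hψc.rpow_const fun t ht => Or.inl (hψpos t ht).ne'
  have hwnn : ∀ t ∈ Icc 0 M, 0 ≤ w t := fun t ht => Real.rpow_nonneg (hψpos t ht).le _
  -- pointwise identity for the derivative square on (s, M)
  have hkey : ∀ t ∈ Ioo s M, ψ t * (deriv η t) ^ 2 = C / 2 * (w t * η t ^ 2) := by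
    intro t ht
    have htM : t ∈ Icc (0:ℝ) M := ⟨by linarith [ht.1], ht.2.le⟩
    rw [(hηd2 t ht).deriv]
    have hg2 : g t ^ 2 = C * ψ t ^ (-(2:ℝ) / (n - 1)) := by
      rw [hgdef]
      exact Real.sq_sqrt (mul_nonneg hC.le (Real.rpow_nonneg (hψpos t htM).le _))
    have hs2 : (1 / Real.sqrt 2 : ℝ) ^ 2 = 1 / 2 := by
      rw [div_pow, one_pow, Real.sq_sqrt (by norm_num : (2:ℝ) ≥ 0)]
    have hψr : ψ t * ψ t ^ (-(2:ℝ) / (n - 1)) = w t := by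
      rw [hwdef]
      nth_rewrite 1 [← Real.rpow_one (ψ t)]
      rw [← Real.rpow_add (hψpos t htM)]
      congr 1
      field_simp
      ring
    calc ψ t * (η t * (1 / Real.sqrt 2 * g t)) ^ 2
        = (ψ t * ψ t ^ (-(2:ℝ) / (n - 1))) * ((1 / Real.sqrt 2) ^ 2 * C / C) * C * η t ^ 2 := by
          rw [mul_pow, mul_pow, hg2]; field_simp
      _ = C / 2 * (w t * η t ^ 2) := by rw [hψr, hs2]; field_simp
  have hne_s : ∀ᵐ (t:ℝ), t ≠ s := by
    refine MeasureTheory.ae_iff.2 ?_; simp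
  have hne_M : ∀ᵐ (t:ℝ), t ≠ M := by
    refine MeasureTheory.ae_iff.2 ?_; simp
  -- integrability of pieces
  have hwη2_1 : IntervalIntegrable (fun t => w t * η t ^ 2) volume 0 s := by
    apply ContinuousOn.intervalIntegrable
    rw [uIcc_of_le hs.le]
    exact (hwc.mono hsub0).mul (hηc0s.pow 2)
  have hwη2_2 : IntervalIntegrable (fun t => w t * η t ^ 2) volume s M := by
    apply ContinuousOn.intervalIntegrable
    rw [uIcc_of_le hsM.le]
    exact (hwc.mono hsub).mul (hηcsM.pow 2)
  have hψd_1 : IntervalIntegrable (fun t => ψ t * (deriv η t) ^ 2) volume 0 s := by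
    rw [intervalIntegrable_iff_integrableOn_Ioc_of_le hs.le]
    have hbase : IntegrableOn (fun t => ψ t / s ^ 2) (Ioc 0 s) := by
      apply ((hψc.mono hsub0).div_const _).integrableOn_Icc.mono_set Ioc_subset_Icc_self
    apply hbase.congr_fun_ae
    filter_upwards [ae_restrict_mem measurableSet_Ioc,
      (MeasureTheory.ae_restrict_of_ae hne_s : ∀ᵐ t ∂(volume.restrict (Ioc 0 s)), t ≠ s)]
      with t ht hts
    have : t ∈ Ioo (0:ℝ) s := ⟨ht.1, lt_of_le_of_ne ht.2 hts⟩
    rw [(hηd1 t this).deriv]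
    rw [div_pow, one_pow]
    ring
  have hψd_2 : IntervalIntegrable (fun t => ψ t * (deriv η t) ^ 2) volume s M := by
    rw [intervalIntegrable_iff_integrableOn_Ioc_of_le hsM.le]
    have hbase : IntegrableOn (fun t => C / 2 * (w t * η t ^ 2)) (Ioc s M) := by
      apply IntegrableOn.mono_set _ Ioc_subset_Icc_self
      exact (continuousOn_const.mul ((hwc.mono hsub).mul (hηcsM.pow 2))).integrableOn_Icc
    apply hbase.congr_fun_ae
    filter_upwards [ae_restrict_mem measurableSet_Ioc,
      (MeasureTheory.ae_restrict_of_ae hne_M : ∀ᵐ t ∂(volume.restrict (Ioc s M)), t ≠ M)]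
      with t ht htM
    exact (hkey t ⟨ht.1, lt_of_le_of_ne ht.2 htM⟩).symm
  -- compute the two pieces of the RHS of hstab
  have hA : ∫ t in (0:ℝ)..s, ψ t * (deriv η t) ^ 2 = ∫ t in (0:ℝ)..s, ψ t / s ^ 2 := by
    apply intervalIntegral.integral_congr_ae
    filter_upwards [hne_s] with t hts ht
    rw [uIoc_of_le hs.le] at ht
    have : t ∈ Ioo (0:ℝ) s := ⟨ht.1, lt_of_le_of_ne ht.2 hts⟩
    rw [(hηd1 t this).deriv, div_pow, one_pow]
    ring
  have hB : ∫ t in s..M, ψ t * (deriv η t) ^ 2 = C / 2 * ∫ t in s..M, w t * η t ^ 2 := by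
    rw [← intervalIntegral.integral_const_mul]
    apply intervalIntegral.integral_congr_ae
    filter_upwards [hne_M] with t htM ht
    rw [uIoc_of_le hsM.le] at ht
    exact hkey t ⟨ht.1, lt_of_le_of_ne ht.2 htM⟩
  have hsplitR : ∫ t in (0:ℝ)..M, ψ t * (deriv η t) ^ 2
      = (∫ t in (0:ℝ)..s, ψ t * (deriv η t) ^ 2) + ∫ t in s..M, ψ t * (deriv η t) ^ 2 :=
    (intervalIntegral.integral_add_adjacent_intervals hψd_1 hψd_2).symm
  have hsplitL : ∫ t in (0:ℝ)..M, w t * η t ^ 2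
      = (∫ t in (0:ℝ)..s, w t * η t ^ 2) + ∫ t in s..M, w t * η t ^ 2 :=
    (intervalIntegral.integral_add_adjacent_intervals hwη2_1 hwη2_2).symm
  have hW1 : 0 ≤ ∫ t in (0:ℝ)..s, w t * η t ^ 2 := by
    apply intervalIntegral.integral_nonneg hs.le
    intro t ht
    exact mul_nonneg (hwnn t (hsub0 ht)) (sq_nonneg _)
  rw [hsplitR, hsplitL, hA, hB] at hstab
  set I := ∫ t in s..M, w t * η t ^ 2
  set A := ∫ t in (0:ℝ)..s, ψ t / s ^ 2
  have h1 : C / 2 * I ≤ A := by nlinarith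
  have hI : I ≤ 2 / C * A := by
    rw [div_mul_eq_mul_div, le_div_iff₀ hC]
    nlinarith
  have hmem : ∀ t ∈ Ioc s M, t ∈ Icc (0:ℝ) M := fun t ht => ⟨by linarith [ht.1], ht.2⟩
  have hmem' : ∀ t ∈ Ioc s M, t ∈ Icc s M := fun t ht => ⟨ht.1.le, ht.2⟩
  set μ : Measure ℝ := volume.restrict (Ioc s M) with hμ
  haveI : IsFiniteMeasure μ := by
    constructor
    rw [hμ, Measure.restrict_apply_univ, Real.volume_Ioc]
    exact ENNReal.ofReal_lt_top
  have hpq : Real.HolderConjugate (n - 2) ((n - 2) / (n - 3)) := by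
    rw [Real.holderConjugate_iff]; constructor
    · linarith
    · field_simp; ring
  set f : ℝ → ℝ := fun t => ψ t ^ ((n-3)/((n-1)*(n-2))) * η t ^ ((2:ℝ)/(n-2)) with hfdef
  set h : ℝ → ℝ := fun t => ψ t ^ (-((n-3)/((n-1)*(n-2)))) * η t ^ (-((2:ℝ)/(n-2))) with hhdef
  have hfc : ContinuousOn f (Icc s M) :=
    ((hψc.mono hsub).rpow_const fun t ht => Or.inl (hψpos t (hsub ht)).ne').mul
      (hηcsM.rpow_const fun t ht => Or.inl (hηpos t ht).ne')
  have hhc : ContinuousOn h (Icc s M) :=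
    ((hψc.mono hsub).rpow_const fun t ht => Or.inl (hψpos t (hsub ht)).ne').mul
      (hηcsM.rpow_const fun t ht => Or.inl (hηpos t ht).ne')
  have memℒ : ∀ (u : ℝ → ℝ), ContinuousOn u (Icc s M) → ∀ p : ENNReal, MemLp u p μ := by
    intro u hu p
    obtain ⟨B, hB⟩ := isCompact_Icc.exists_bound_of_continuousOn hu
    exact MemLp.of_bound ((hu.mono Ioc_subset_Icc_self).aestronglyMeasurable measurableSet_Ioc) B
      (by filter_upwards [ae_restrict_mem measurableSet_Ioc] with t ht
          exact hB t (Ioc_subset_Icc_self ht))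
  have hfnn : 0 ≤ᵐ[μ] f := by
    filter_upwards [ae_restrict_mem measurableSet_Ioc] with t ht
    exact mul_nonneg (Real.rpow_nonneg (hψpos t (hmem t ht)).le _)
      (Real.rpow_nonneg (hηpos t (hmem' t ht)).le _)
  have hhnn : 0 ≤ᵐ[μ] h := by
    filter_upwards [ae_restrict_mem measurableSet_Ioc] with t ht
    exact mul_nonneg (Real.rpow_nonneg (hψpos t (hmem t ht)).le _)
      (Real.rpow_nonneg (hηpos t (hmem' t ht)).le _)
  have hold := MeasureTheory.integral_mul_le_Lp_mul_Lq_of_nonneg hpq hfnn hhnn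
    (memℒ f hfc _) (memℒ h hhc _)
  -- LHS equals M - s
  have hlhs : ∫ a, f a * h a ∂μ = M - s := by
    rw [hμ, MeasureTheory.setIntegral_congr_fun measurableSet_Ioc
      (g := fun _ => (1:ℝ)) ?_]
    · simp [Real.volume_Ioc, ENNReal.toReal_ofReal (by linarith : (0:ℝ) ≤ M - s), hsM.le]
    · intro t ht
      have h1 : 0 < ψ t := hψpos t (hmem t ht)
      have h2 : 0 < η t := hηpos t (hmem' t ht)
      show f t * h t = 1
      rw [hfdef, hhdef]
      dsimp only
      rw [show ψ t ^ ((n-3)/((n-1)*(n-2))) * η t ^ ((2:ℝ)/(n-2)) *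
          (ψ t ^ (-((n-3)/((n-1)*(n-2)))) * η t ^ (-((2:ℝ)/(n-2)))) =
          (ψ t ^ ((n-3)/((n-1)*(n-2))) * ψ t ^ (-((n-3)/((n-1)*(n-2))))) *
          (η t ^ ((2:ℝ)/(n-2)) * η t ^ (-((2:ℝ)/(n-2)))) by ring,
        ← Real.rpow_add h1, ← Real.rpow_add h2]
      simp
  have hfp : EqOn (fun t => f t ^ (n-2))
      (fun t => ψ t ^ ((n - 3) / (n - 1)) * η t ^ 2) (Ioc s M) := by
    intro t ht
    have h1 : 0 < ψ t := hψpos t (hmem t ht)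
    have h2 : 0 < η t := hηpos t (hmem' t ht)
    show f t ^ (n-2) = _
    rw [hfdef]
    dsimp only
    rw [Real.mul_rpow (Real.rpow_nonneg h1.le _) (Real.rpow_nonneg h2.le _),
      ← Real.rpow_natCast (η t) 2, ← Real.rpow_mul h1.le, ← Real.rpow_mul h2.le]
    congr 1
    · congr 1; field_simp
    · congr 1; push_cast; field_simp
  have hF1 : ∫ a, f a ^ (n-2) ∂μ = ∫ t in s..M, ψ t ^ ((n - 3) / (n - 1)) * η t ^ 2 := by
    rw [hμ, MeasureTheory.setIntegral_congr_fun measurableSet_Ioc hfp]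
    exact (intervalIntegral.integral_of_le hsM.le).symm
  have hhq : EqOn (fun t => h t ^ ((n-2)/(n-3)))
      (fun t => ψ t ^ (-(1:ℝ)/(n-1)) * η t ^ (-(2:ℝ)/(n-3))) (Ioc s M) := by
    intro t ht
    have h1 : 0 < ψ t := hψpos t (hmem t ht)
    have h2 : 0 < η t := hηpos t (hmem' t ht)
    show h t ^ ((n-2)/(n-3)) = _
    rw [hhdef]
    dsimp only
    rw [Real.mul_rpow (Real.rpow_nonneg h1.le _) (Real.rpow_nonneg h2.le _),
      ← Real.rpow_mul h1.le, ← Real.rpow_mul h2.le]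
    congr 2
    · field_simp
    · field_simp
  have hF2 : ∫ a, h a ^ ((n-2)/(n-3)) ∂μ
      = ∫ t in s..M, ψ t ^ (-(1:ℝ)/(n-1)) * η t ^ (-(2:ℝ)/(n-3)) := by
    rw [hμ, MeasureTheory.setIntegral_congr_fun measurableSet_Ioc hhq]
    exact (intervalIntegral.integral_of_le hsM.le).symm
  set K := Real.sqrt (2/C) * (n-3)/2 with hK
  have hφJc : ContinuousOn (fun t => ψ t ^ (-(1:ℝ)/(n-1)) * η t ^ (-(2:ℝ)/(n-3))) (Icc s M) :=
    ((hψc.mono hsub).rpow_const fun t ht => Or.inl (hψpos t (hsub ht)).ne').mul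
      (hηcsM.rpow_const fun t ht => Or.inl (hηpos t ht).ne')
  set Φ : ℝ → ℝ := fun t => -K * η t ^ (-(2:ℝ)/(n-3)) with hΦ
  have hΦc : ContinuousOn Φ (Icc s M) :=
    continuousOn_const.mul (hηcsM.rpow_const fun t ht => Or.inl (hηpos t ht).ne')
  have s2 : Real.sqrt 2 ≠ 0 := by positivity
  have sC : Real.sqrt C ≠ 0 := by positivity
  have hsqC : Real.sqrt (2/C) = Real.sqrt 2 / Real.sqrt C := Real.sqrt_div (by norm_num) C
  have hΦd : ∀ x ∈ Ioo s M,
      HasDerivWithinAt Φ (ψ x ^ (-(1:ℝ)/(n-1)) * η x ^ (-(2:ℝ)/(n-3))) (Ioi x) x := by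
    intro x hx
    have h1 : 0 < ψ x := hψpos x ⟨by linarith [hx.1], hx.2.le⟩
    have h2 : 0 < η x := hηpos x ⟨hx.1.le, hx.2.le⟩
    have hd := ((hηd2 x hx).rpow_const (p := -(2:ℝ)/(n-3)) (Or.inl h2.ne')).const_mul (-K)
    have hgx : g x = Real.sqrt C * ψ x ^ (-(1:ℝ)/(n-1)) := by
      rw [hgdef]
      dsimp only
      rw [show ψ x ^ (-(2:ℝ)/(n-1)) = (ψ x ^ (-(1:ℝ)/(n-1)))^2 by
          rw [← Real.rpow_natCast (ψ x ^ (-(1:ℝ)/(n-1))) 2, ← Real.rpow_mul h1.le]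
          congr 1
          push_cast
          ring,
        Real.sqrt_mul hC.le, Real.sqrt_sq (Real.rpow_nonneg h1.le _)]
    have hηx : η x ^ (-(2:ℝ)/(n-3) - 1) * η x = η x ^ (-(2:ℝ)/(n-3)) := by
      nth_rewrite 2 [← Real.rpow_one (η x)]
      rw [← Real.rpow_add h2]
      norm_num
    refine hd.hasDerivWithinAt.congr_deriv ?_
    rw [hgx]
    rw [show -K * (η x * (1/Real.sqrt 2 * (Real.sqrt C * ψ x ^ (-(1:ℝ)/(n-1)))) *
        (-(2:ℝ)/(n-3)) * η x ^ (-(2:ℝ)/(n-3) - 1)) =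
        (-K * (-(2:ℝ)/(n-3)) * (1/Real.sqrt 2) * Real.sqrt C) *
        (ψ x ^ (-(1:ℝ)/(n-1)) * (η x ^ (-(2:ℝ)/(n-3) - 1) * η x)) by ring, hηx]
    have hc1 : -K * (-(2:ℝ)/(n-3)) * (1/Real.sqrt 2) * Real.sqrt C = 1 := by
      rw [hK, hsqC]
      field_simp
    rw [hc1, one_mul]
  have hJ : ∫ t in s..M, ψ t ^ (-(1:ℝ)/(n-1)) * η t ^ (-(2:ℝ)/(n-3)) = Φ M - Φ s :=
    intervalIntegral.integral_eq_sub_of_hasDeriv_right_of_le hsM.le hΦc hΦd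
      (by apply ContinuousOn.intervalIntegrable; rwa [uIcc_of_le hsM.le])
  have hKnn : 0 ≤ K := by rw [hK]; positivity
  have hJle : (∫ t in s..M, ψ t ^ (-(1:ℝ)/(n-1)) * η t ^ (-(2:ℝ)/(n-3))) ≤ K := by
    rw [hJ, hΦ]
    dsimp only
    rw [hηs1, Real.one_rpow]
    have h2 : 0 ≤ η M ^ (-(2:ℝ)/(n-3)) := Real.rpow_nonneg (hηpos M ⟨hsM.le, le_rfl⟩).le _
    nlinarith
  have hJnn : 0 ≤ ∫ t in s..M, ψ t ^ (-(1:ℝ)/(n-1)) * η t ^ (-(2:ℝ)/(n-3)) :=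
    intervalIntegral.integral_nonneg hsM.le fun t ht =>
      mul_nonneg (Real.rpow_nonneg (hψpos t (hsub ht)).le _)
        (Real.rpow_nonneg (hηpos t ht).le _)
  have hInn : 0 ≤ ∫ t in s..M, ψ t ^ ((n - 3) / (n - 1)) * η t ^ 2 :=
    intervalIntegral.integral_nonneg hsM.le fun t ht =>
      mul_nonneg (Real.rpow_nonneg (hψpos t (hsub ht)).le _) (sq_nonneg _)
  rw [hlhs, hF1, hF2, one_div_div] at hold
  refine le_trans hold ?_
  apply mul_le_mul (Real.rpow_le_rpow hInn hI (by positivity))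
    (Real.rpow_le_rpow hJnn hJle (by positivity))
    (Real.rpow_nonneg hJnn _) (Real.rpow_nonneg (le_trans hInn hI) _)
end

section
/- Let $n > p+q$ with $p>1$, $q\geq 1$, set $p_q^\star = np/(n-(p+q))$, $R>0$, and let $w:[0,R]\to[0,\infty)$ be $C^1$ nonincreasing with $w(R)=0$. Then $\left(\int_0^R w(s)^{p_q^\star} s^{n-1}\,ds\right)^{1/p_q^\star} \leq C(n,p,q) \left(\int_0^R |w'(s)|^p s^{n-1-q}\,ds\right)^{1/p}$ for some constant $C(n,p,q)$ depending only on $n$, $p$, $q$. -/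
open Real MeasureTheory Set intervalIntegral

lemma holder_Ioc {p p' : ℝ} (hpq : Real.HolderConjugate p p') {a b : ℝ} (F G : ℝ → ℝ)
    (hF0 : ∀ x ∈ Set.Ioc a b, 0 ≤ F x) (hG0 : ∀ x ∈ Set.Ioc a b, 0 ≤ G x)
    (hFm : ContinuousOn F (Set.Ioc a b)) (hGm : ContinuousOn G (Set.Ioc a b))
    (hFi : IntegrableOn (fun x => F x ^ p) (Set.Ioc a b))
    (hGi : IntegrableOn (fun x => G x ^ p') (Set.Ioc a b)) :
    ∫ x in Set.Ioc a b, F x * G x ≤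
      (∫ x in Set.Ioc a b, F x ^ p) ^ (1/p) * (∫ x in Set.Ioc a b, G x ^ p') ^ (1/p') := by
  set μ := volume.restrict (Set.Ioc a b) with hμ
  have hFae : 0 ≤ᵐ[μ] F := (ae_restrict_iff' measurableSet_Ioc).2 (ae_of_all _ hF0)
  have hGae : 0 ≤ᵐ[μ] G := (ae_restrict_iff' measurableSet_Ioc).2 (ae_of_all _ hG0)
  have mem_of : ∀ (r : ℝ), 0 < r → ∀ (H : ℝ → ℝ), AEStronglyMeasurable H μ →
      Integrable (fun x => H x ^ r) μ → (0 ≤ᵐ[μ] H) → MemLp H (ENNReal.ofReal r) μ := by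
    intro r hr H hm hi h0
    have hne : ENNReal.ofReal r ≠ 0 := by
      simp [ENNReal.ofReal_eq_zero, not_le, hr]
    have key : MemLp (fun x => ‖H x‖ ^ (ENNReal.ofReal r).toReal)
        (ENNReal.ofReal r / ENNReal.ofReal r) μ := by
      rw [ENNReal.toReal_ofReal hr.le, ENNReal.div_self hne (by simp)]
      rw [memLp_one_iff_integrable]
      refine hi.congr ?_
      filter_upwards [h0] with x hx
      rw [Real.norm_of_nonneg hx]
    exact (memLp_norm_rpow_iff hm hne (by simp)).1 key
  have hFmem : MemLp F (ENNReal.ofReal p) μ :=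
    mem_of p hpq.pos F (hFm.aestronglyMeasurable measurableSet_Ioc) hFi hFae
  have hGmem : MemLp G (ENNReal.ofReal p') μ :=
    mem_of p' hpq.symm.pos G (hGm.aestronglyMeasurable measurableSet_Ioc) hGi hGae
  simpa using
    MeasureTheory.integral_mul_le_Lp_mul_Lq_of_nonneg hpq hFae hGae hFmem hGmem

lemma hasDerivWithinAt_Ioi_of_Icc {R : ℝ} {w : ℝ → ℝ}
    (hw : ContDiffOn ℝ 1 w (Set.Icc 0 R)) {x : ℝ} (hx : x ∈ Set.Ico 0 R) :
    HasDerivWithinAt w (derivWithin w (Set.Icc 0 R) x) (Set.Ioi x) x := by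
  have hx' : x ∈ Set.Icc 0 R := ⟨hx.1, hx.2.le⟩
  exact ((hw.differentiableOn one_ne_zero) x hx').hasDerivWithinAt.mono_of_mem_nhdsWithin
    (Icc_mem_nhdsGT_of_mem hx)

lemma ftc_Icc {R : ℝ} (hR : 0 < R) {w : ℝ → ℝ} (hw : ContDiffOn ℝ 1 w (Set.Icc 0 R))
    {s : ℝ} (hs : s ∈ Set.Icc 0 R) :
    ∫ t in s..R, derivWithin w (Set.Icc 0 R) t = w R - w s := by
  have hgc : ContinuousOn (derivWithin w (Set.Icc 0 R)) (Set.Icc 0 R) :=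
    hw.continuousOn_derivWithin (uniqueDiffOn_Icc hR) le_rfl
  refine intervalIntegral.integral_eq_sub_of_hasDeriv_right_of_le hs.2
    (hw.continuousOn.mono (Set.Icc_subset_Icc hs.1 le_rfl)) (fun x hx => ?_) ?_
  · exact hasDerivWithinAt_Ioi_of_Icc hw ⟨hs.1.trans hx.1.le, hx.2⟩
  · have : ContinuousOn (derivWithin w (Set.Icc 0 R)) (Set.uIcc s R) := by
      rw [Set.uIcc_of_le hs.2]
      exact hgc.mono (Set.Icc_subset_Icc hs.1 le_rfl)
    exact this.intervalIntegrable

/-- One-dimensional weighted Hardy–Sobolev inequality for radial profiles in the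
subcritical case `n > p + q`, with `p_q⋆ = np/(n-(p+q))` and a constant depending
only on `n`, `p`, `q`. -/
theorem stmt14 (n p q : ℝ) (hp : 1 < p) (hq : 1 ≤ q) (hn : p + q < n) :
    ∃ C > (0 : ℝ), ∀ R : ℝ, 0 < R → ∀ w : ℝ → ℝ,
      ContDiffOn ℝ 1 w (Set.Icc 0 R) → AntitoneOn w (Set.Icc 0 R) →
      (∀ s ∈ Set.Icc (0 : ℝ) R, 0 ≤ w s) → w R = 0 →
      (∫ s in (0 : ℝ)..R, w s ^ (n * p / (n - (p + q))) * s ^ (n - 1)) ^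
          ((n - (p + q)) / (n * p)) ≤
        C * (∫ s in (0 : ℝ)..R,
          |derivWithin w (Set.Icc 0 R) s| ^ p * s ^ (n - 1 - q)) ^ (1 / p) := by
  have hp0 : (0:ℝ) < p := one_pos.trans hp
  have hp1 : (0:ℝ) < p - 1 := sub_pos.2 hp
  have hd : (0:ℝ) < n - (p + q) := sub_pos.2 hn
  have hq0 : (0:ℝ) < q := one_pos.trans_le hq
  have hn1q : (0:ℝ) < n - 1 - q := by linarith
  have hn1 : (0:ℝ) < n - 1 := by linarith
  have hn0 : (0:ℝ) < n := by linarith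
  set p' := p / (p - 1) with hp'def
  have hpq : p.HolderConjugate p' := Real.HolderConjugate.conjExponent hp
  have hp'0 : 0 < p' := hpq.symm.pos
  set P := n * p / (n - (p + q)) with hPdef
  have hP0 : 0 < P := by positivity
  have hPsub : P - p = p * (p + q) / (n - (p + q)) := by
    rw [hPdef]; field_simp; ring
  have hPp : 0 < P - p := by rw [hPsub]; positivity
  set Kα := ((p - 1) / (n - (p + q))) ^ (1 / p') with hKαdef
  have hKα0 : 0 < Kα := Real.rpow_pos_of_pos (by positivity) _
  set c := p / (n - (p + q)) with hcdef
  have hc0 : 0 < c := by positivity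
  set C₀ := Kα ^ (P - p) * c ^ p with hC₀def
  have hC₀ : 0 < C₀ :=
    mul_pos (Real.rpow_pos_of_pos hKα0 _) (Real.rpow_pos_of_pos hc0 _)
  refine ⟨C₀ ^ (1 / P), Real.rpow_pos_of_pos hC₀ _, ?_⟩
  intro R hR w hw hmono hwnn hwR
  set g := derivWithin w (Set.Icc 0 R) with hgdef
  set I := ∫ s in (0:ℝ)..R, |g s| ^ p * s ^ (n - 1 - q) with hIdef
  set m := n - 1 - p - q with hmdef
  have hm1 : m + 1 = n - (p + q) := by rw [hmdef]; ring
  have hmneg : (-1:ℝ) < m := by rw [hmdef]; linarith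
  set J := ∫ s in (0:ℝ)..R, w s ^ p * s ^ m with hJdef
  -- basic continuity
  have hwc : ContinuousOn w (Set.Icc 0 R) := hw.continuousOn
  have hgc : ContinuousOn g (Set.Icc 0 R) :=
    hw.continuousOn_derivWithin (uniqueDiffOn_Icc hR) le_rfl
  -- nonnegativity of the integrals
  have hI0 : 0 ≤ I := by
    rw [hIdef]
    refine intervalIntegral.integral_nonneg hR.le (fun u hu => ?_)
    exact mul_nonneg (Real.rpow_nonneg (abs_nonneg _) _) (Real.rpow_nonneg hu.1 _)
  have hJ0 : 0 ≤ J := by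
    rw [hJdef]
    refine intervalIntegral.integral_nonneg hR.le (fun u hu => ?_)
    exact mul_nonneg (Real.rpow_nonneg (hwnn u hu) _) (Real.rpow_nonneg hu.1 _)
  -- integrability
  have hwpc : ContinuousOn (fun s => w s ^ p) (Set.Icc 0 R) :=
    hwc.rpow_const (fun x _ => Or.inr hp0.le)
  have hJint : IntervalIntegrable (fun s => w s ^ p * s ^ m) volume 0 R := by
    refine IntervalIntegrable.continuousOn_mul (intervalIntegrable_rpow' hmneg) ?_
    rw [Set.uIcc_of_le hR.le]; exact hwpc
  have hsnq : ContinuousOn (fun s : ℝ => s ^ (n - 1 - q)) (Set.Icc 0 R) :=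
    continuousOn_id.rpow_const (fun x _ => Or.inr hn1q.le)
  have hfpc : ContinuousOn (fun s => |g s| ^ p) (Set.Icc 0 R) :=
    hgc.abs.rpow_const (fun x _ => Or.inr hp0.le)
  have hIint : IntervalIntegrable (fun s => |g s| ^ p * s ^ (n-1-q)) volume 0 R := by
    apply ContinuousOn.intervalIntegrable
    rw [Set.uIcc_of_le hR.le]
    exact hfpc.mul hsnq
  -- pointwise bound
  have hIioc : IntegrableOn (fun x => |g x| ^ p * x ^ (n-1-q)) (Set.Ioc 0 R) :=
    (intervalIntegrable_iff_integrableOn_Ioc_of_le hR.le).1 hIint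
  set a := (n - 1 - q)/p with hadef
  have ha0 : 0 < a := by positivity
  have hap : a * p = n - 1 - q := by rw [hadef]; field_simp
  have hFc : ContinuousOn (fun t => |g t| * t ^ a) (Set.Icc 0 R) :=
    hgc.abs.mul (continuousOn_id.rpow_const fun x _ => Or.inr ha0.le)
  have hFpc : ContinuousOn (fun t => (|g t| * t ^ a) ^ p) (Set.Icc 0 R) :=
    hFc.rpow_const fun x _ => Or.inr hp0.le
  have hFpeq : ∀ t : ℝ, 0 < t → (|g t| * t ^ a) ^ p = |g t| ^ p * t ^ (n-1-q) := by
    intro t ht0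
    rw [Real.mul_rpow (abs_nonneg _) (Real.rpow_nonneg ht0.le _),
      ← Real.rpow_mul ht0.le, hap]
  have hpt : ∀ s ∈ Set.Ioc (0:ℝ) R,
      w s ≤ Kα * I ^ (1/p) * s ^ (-((n - (p + q))/p)) := by
    intro s hs
    have hs0 : 0 < s := hs.1
    have hsR : s ≤ R := hs.2
    have hsIcc : s ∈ Set.Icc 0 R := ⟨hs0.le, hsR⟩
    have hsub : Set.Ioc s R ⊆ Set.Icc 0 R := fun x hx => ⟨(hs0.trans hx.1).le, hx.2⟩
    set α := (n - 1 - q)/(p - 1) with hαdef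
    have hα1 : 1 < α := by rw [hαdef, lt_div_iff₀ hp1]; linarith
    have hαs : 0 < α - 1 := sub_pos.2 hα1
    -- step 1 : w s ≤ ∫ |g|
    have h1 : w s ≤ ∫ t in s..R, |g t| := by
      have hftc := ftc_Icc hR hw hsIcc
      have hws : w s = -(∫ t in s..R, g t) := by
        rw [hftc, hwR]; ring
      rw [hws]
      exact (neg_le_abs _).trans (intervalIntegral.abs_integral_le_integral_abs hsR)
    -- Hölder on Ioc s R
    have hGc : ContinuousOn (fun t : ℝ => t ^ (-a)) (Set.Ioc s R) :=
      continuousOn_id.rpow_const fun x hx => Or.inl (ne_of_gt (hs0.trans hx.1))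
    have hFi : IntegrableOn (fun x => (|g x| * x ^ a) ^ p) (Set.Ioc s R) :=
      (hFpc.integrableOn_compact isCompact_Icc).mono_set hsub
    have hGpc : ContinuousOn (fun t : ℝ => (t ^ (-a)) ^ p') (Set.Icc s R) :=
      (continuousOn_id.rpow_const fun x hx => Or.inl (ne_of_gt (hs0.trans_le hx.1))).rpow_const
        fun x _ => Or.inr hp'0.le
    have hGi : IntegrableOn (fun x => (x ^ (-a)) ^ p') (Set.Ioc s R) :=
      (hGpc.integrableOn_compact isCompact_Icc).mono_set Set.Ioc_subset_Icc_self
    have hH := holder_Ioc hpq (fun t => |g t| * t ^ a) (fun t : ℝ => t ^ (-a))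
      (fun x hx => mul_nonneg (abs_nonneg _) (Real.rpow_nonneg (hs0.trans hx.1).le _))
      (fun x hx => Real.rpow_nonneg (hs0.trans hx.1).le _)
      (hFc.mono hsub) hGc hFi hGi
    have h2 : (∫ t in s..R, |g t|) = ∫ x in Set.Ioc s R, (|g x| * x ^ a) * x ^ (-a) := by
      rw [intervalIntegral.integral_of_le hsR]
      refine setIntegral_congr_fun measurableSet_Ioc (fun t ht => ?_)
      have ht0 : 0 < t := hs0.trans ht.1
      rw [mul_assoc, ← Real.rpow_add ht0, add_neg_cancel, Real.rpow_zero, mul_one]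
    -- first factor ≤ I
    have hF1 : (∫ x in Set.Ioc s R, (|g x| * x ^ a) ^ p) ≤ I := by
      have e1 : (∫ x in Set.Ioc s R, (|g x| * x ^ a) ^ p)
          = ∫ x in Set.Ioc s R, |g x| ^ p * x ^ (n-1-q) :=
        setIntegral_congr_fun measurableSet_Ioc fun t ht => hFpeq t (hs0.trans ht.1)
      rw [e1, hIdef, intervalIntegral.integral_of_le hR.le]
      refine setIntegral_mono_set hIioc ?_ (HasSubset.Subset.eventuallyLE (Set.Ioc_subset_Ioc_left hs0.le))
      refine (ae_restrict_iff' measurableSet_Ioc).2 (ae_of_all _ fun x hx => ?_)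
      exact mul_nonneg (Real.rpow_nonneg (abs_nonneg _) _) (Real.rpow_nonneg hx.1.le _)
    -- second factor
    have hGval : (∫ x in Set.Ioc s R, (x ^ (-a)) ^ p') ≤ (p-1)/(n-(p+q)) * s ^ (-α+1) := by
      have e2 : (∫ x in Set.Ioc s R, (x ^ (-a)) ^ p') = ∫ t in s..R, t ^ (-α) := by
        rw [intervalIntegral.integral_of_le hsR]
        refine setIntegral_congr_fun measurableSet_Ioc (fun t ht => ?_)
        have ht0 : 0 < t := hs0.trans ht.1
        rw [← Real.rpow_mul ht0.le]
        congr 1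
        rw [hadef, hαdef, hp'def]
        field_simp
      have e3 : (∫ t in s..R, t ^ (-α)) = (R ^ (-α+1) - s ^ (-α+1))/(-α+1) := by
        refine integral_rpow (Or.inr ⟨by intro h; rw [neg_eq_iff_eq_neg] at h; simp at h; linarith, ?_⟩)
        rw [Set.uIcc_of_le hsR]
        intro h0
        exact absurd h0.1 (not_le.2 hs0)
      have e4 : (R ^ (-α+1) - s ^ (-α+1))/(-α+1) = (s ^ (-α+1) - R ^ (-α+1))/(α-1) := by
        rw [show -α+1 = -(α-1) by ring, div_neg, ← neg_div, neg_sub]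
      have e5 : (s ^ (-α+1) - R ^ (-α+1))/(α-1) ≤ s ^ (-α+1)/(α-1) := by
        rw [sub_div]
        exact sub_le_self _ (div_nonneg (Real.rpow_nonneg hR.le _) hαs.le)
      have e6 : s ^ (-α+1)/(α-1) = (p-1)/(n-(p+q)) * s ^ (-α+1) := by
        have : α - 1 = (n-(p+q))/(p-1) := by rw [hαdef]; field_simp; ring
        rw [this, div_div_eq_mul_div, div_eq_mul_inv, div_eq_mul_inv]
        field_simp
      rw [e2, e3, e4, ← e6]
      exact e5
    have hG0' : 0 ≤ ∫ x in Set.Ioc s R, (x ^ (-a)) ^ p' :=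
      setIntegral_nonneg measurableSet_Ioc fun x hx =>
        Real.rpow_nonneg (Real.rpow_nonneg (hs0.trans hx.1).le _) _
    have hF0' : 0 ≤ ∫ x in Set.Ioc s R, (|g x| * x ^ a) ^ p :=
      setIntegral_nonneg measurableSet_Ioc fun x hx =>
        Real.rpow_nonneg (mul_nonneg (abs_nonneg _) (Real.rpow_nonneg (hs0.trans hx.1).le _)) _
    -- combine
    have step : w s ≤ I ^ (1/p) * ((p-1)/(n-(p+q)) * s ^ (-α+1)) ^ (1/p') := by
      calc w s ≤ ∫ t in s..R, |g t| := h1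
        _ = ∫ x in Set.Ioc s R, (|g x| * x ^ a) * x ^ (-a) := h2
        _ ≤ (∫ x in Set.Ioc s R, (|g x| * x ^ a) ^ p) ^ (1/p)
            * (∫ x in Set.Ioc s R, (x ^ (-a)) ^ p') ^ (1/p') := hH
        _ ≤ I ^ (1/p) * ((p-1)/(n-(p+q)) * s ^ (-α+1)) ^ (1/p') := by
            refine mul_le_mul ?_ ?_ (Real.rpow_nonneg hG0' _) (Real.rpow_nonneg hI0 _)
            · exact Real.rpow_le_rpow hF0' hF1 (by positivity)
            · exact Real.rpow_le_rpow hG0' hGval (by positivity)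
    have hfin : ((p-1)/(n-(p+q)) * s ^ (-α+1)) ^ (1/p') = Kα * s ^ (-((n - (p + q))/p)) := by
      rw [Real.mul_rpow (by positivity) (Real.rpow_nonneg hs0.le _), hKαdef,
        ← Real.rpow_mul hs0.le]
      congr 1
      rw [hαdef, hp'def]
      field_simp
      ring
    rw [hfin] at step
    calc w s ≤ I ^ (1/p) * (Kα * s ^ (-((n - (p + q))/p))) := step
      _ = Kα * I ^ (1/p) * s ^ (-((n - (p + q))/p)) := by ring
  -- Hardy inequality
  have hm1ne : m + 1 ≠ 0 := by rw [hm1]; exact hd.ne'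
  have hJioc : IntegrableOn (fun s => w s ^ p * s ^ m) (Set.Ioc 0 R) :=
    (intervalIntegrable_iff_integrableOn_Ioc_of_le hR.le).1 hJint
  have hHardy : J ≤ c * (I ^ (1/p) * J ^ (1/p')) := by
    set B := ∫ s in (0:ℝ)..R, w s ^ (p-1) * |g s| * s ^ (m+1) with hBdef
    have hsubIoc : Set.Ioc (0:ℝ) R ⊆ Set.Icc 0 R := Set.Ioc_subset_Icc_self
    -- Hölder step : B ≤ I^{1/p} * J^{1/p'}
    have hep : (p - 1) * p' = p := by rw [hp'def]; field_simp
    have hem : (m + 1 - a) * p' = m := by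
      rw [hadef, hp'def, hmdef]; field_simp; ring
    have heqG : ∀ t ∈ Set.Ioc (0:ℝ) R,
        (w t ^ (p-1) * t ^ (m+1-a)) ^ p' = w t ^ p * t ^ m := by
      intro t ht
      rw [Real.mul_rpow (Real.rpow_nonneg (hwnn t (hsubIoc ht)) _)
          (Real.rpow_nonneg ht.1.le _),
        ← Real.rpow_mul (hwnn t (hsubIoc ht)), ← Real.rpow_mul ht.1.le, hep, hem]
    have hGc2 : ContinuousOn (fun t => w t ^ (p-1) * t ^ (m+1-a)) (Set.Ioc 0 R) :=
      ((hwc.mono hsubIoc).rpow_const fun x _ => Or.inr hp1.le).mul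
        (continuousOn_id.rpow_const fun x hx => Or.inl (ne_of_gt hx.1))
    have hGi2 : IntegrableOn (fun t => (w t ^ (p-1) * t ^ (m+1-a)) ^ p') (Set.Ioc 0 R) :=
      hJioc.congr ((ae_restrict_iff' measurableSet_Ioc).2
        (ae_of_all _ fun t ht => (heqG t ht).symm))
    have hH2 := holder_Ioc hpq (fun t => |g t| * t ^ a)
      (fun t => w t ^ (p-1) * t ^ (m+1-a))
      (fun x hx => mul_nonneg (abs_nonneg _) (Real.rpow_nonneg hx.1.le _))
      (fun x hx => mul_nonneg (Real.rpow_nonneg (hwnn x (hsubIoc hx)) _)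
        (Real.rpow_nonneg hx.1.le _))
      (hFc.mono hsubIoc) hGc2
      ((hFpc.integrableOn_compact isCompact_Icc).mono_set hsubIoc) hGi2
    have hBeq : B = ∫ x in Set.Ioc (0:ℝ) R,
        (|g x| * x ^ a) * (w x ^ (p-1) * x ^ (m+1-a)) := by
      rw [hBdef, intervalIntegral.integral_of_le hR.le]
      refine setIntegral_congr_fun measurableSet_Ioc (fun t ht => ?_)
      have ht0 : 0 < t := ht.1
      have : t ^ a * t ^ (m+1-a) = t ^ (m+1) := by
        rw [← Real.rpow_add ht0]; congr 1; ring
      calc w t ^ (p-1) * |g t| * t ^ (m+1)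
          = w t ^ (p-1) * |g t| * (t ^ a * t ^ (m+1-a)) := by rw [this]
        _ = (|g t| * t ^ a) * (w t ^ (p-1) * t ^ (m+1-a)) := by ring
    have hIeq : (∫ x in Set.Ioc (0:ℝ) R, (|g x| * x ^ a) ^ p) = I := by
      rw [hIdef, intervalIntegral.integral_of_le hR.le]
      exact setIntegral_congr_fun measurableSet_Ioc fun t ht => hFpeq t ht.1
    have hJeq : (∫ x in Set.Ioc (0:ℝ) R, (w x ^ (p-1) * x ^ (m+1-a)) ^ p') = J := by
      rw [hJdef, intervalIntegral.integral_of_le hR.le]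
      exact setIntegral_congr_fun measurableSet_Ioc heqG
    have hB : B ≤ I ^ (1/p) * J ^ (1/p') := by
      rw [hBeq, ← hIeq, ← hJeq]
      exact hH2
    -- IBP step
    have hintB : IntervalIntegrable (fun s => w s ^ (p-1) * |g s| * s ^ (m+1))
        volume 0 R := by
      apply ContinuousOn.intervalIntegrable
      rw [Set.uIcc_of_le hR.le]
      exact ((hwc.rpow_const fun x _ => Or.inr hp1.le).mul hgc.abs).mul
        (continuousOn_id.rpow_const fun x _ => Or.inr (by rw [hm1]; exact hd.le))
    have hIBP : ∀ ε ∈ Set.Ioo (0:ℝ) R, (∫ s in ε..R, w s ^ p * s ^ m) ≤ c * B := by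
      intro ε hε
      have hε0 : 0 < ε := hε.1
      have hεR : ε < R := hε.2
      have hsubε : Set.Icc ε R ⊆ Set.Icc 0 R := Set.Icc_subset_Icc hε0.le le_rfl
      have huIcc : Set.uIcc ε R = Set.Icc ε R := Set.uIcc_of_le hεR.le
      set ψ : ℝ → ℝ := fun s => c * (w s ^ (p-1) * g s * s ^ (m+1)) with hψdef
      set φ : ℝ → ℝ := fun s => ψ s + w s ^ p * s ^ m with hφdef
      have hcm : c = p / (m+1) := by rw [hcdef, hm1]
      have hderiv : ∀ x ∈ Set.Ioo ε R,
          HasDerivWithinAt (fun s => w s ^ p * s ^ (m+1) / (m+1)) (φ x)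
            (Set.Ioi x) x := by
        intro x hx
        have hx0 : 0 < x := hε0.trans hx.1
        have hw' : HasDerivWithinAt w (g x) (Set.Ioi x) x :=
          hasDerivWithinAt_Ioi_of_Icc hw ⟨hx0.le, hx.2⟩
        have h1 : HasDerivWithinAt (fun s => w s ^ p) (g x * p * w x ^ (p-1))
            (Set.Ioi x) x := hw'.rpow_const (Or.inr hp.le)
        have h2 : HasDerivWithinAt (fun s : ℝ => s ^ (m+1)) ((m+1) * x ^ (m+1-1))
            (Set.Ioi x) x :=
          (Real.hasDerivAt_rpow_const (Or.inl hx0.ne')).hasDerivWithinAt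
        have h3 := (h1.mul h2).div_const (m+1)
        refine h3.congr_deriv ?_
        rw [hφdef, hψdef, hcm]
        have : x ^ (m+1-1) = x ^ m := by congr 1; ring
        rw [this]
        field_simp
      have hFcont : ContinuousOn (fun s => w s ^ p * s ^ (m+1) / (m+1))
          (Set.Icc ε R) :=
        ((hwpc.mono hsubε).mul (continuousOn_id.rpow_const fun x hx =>
          Or.inl (ne_of_gt (hε0.trans_le hx.1)))).div_const _
      have hinner : ContinuousOn (fun s => w s ^ (p-1) * g s * s ^ (m+1))
          (Set.Icc ε R) :=
        (((hwc.mono hsubε).rpow_const fun x _ => Or.inr hp1.le).mul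
          (hgc.mono hsubε)).mul (continuousOn_id.rpow_const fun x hx =>
            Or.inl (ne_of_gt (hε0.trans_le hx.1)))
      have hψcont : ContinuousOn ψ (Set.Icc ε R) := continuousOn_const.mul hinner
      have hφcont : ContinuousOn φ (Set.Icc ε R) :=
        hψcont.add ((hwpc.mono hsubε).mul (continuousOn_id.rpow_const fun x hx =>
          Or.inl (ne_of_gt (hε0.trans_le hx.1))))
      have hφint : IntervalIntegrable φ volume ε R := by
        apply ContinuousOn.intervalIntegrable
        rw [huIcc]; exact hφcont
      have hFTC := intervalIntegral.integral_eq_sub_of_hasDeriv_right_of_le hεR.le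
        hFcont hderiv hφint
      have hFR : w R ^ p * R ^ (m+1) / (m+1) = 0 := by
        rw [hwR, Real.zero_rpow hp0.ne', zero_mul, zero_div]
      have hFε : 0 ≤ w ε ^ p * ε ^ (m+1) / (m+1) := by
        apply div_nonneg _ (by rw [hm1]; exact hd.le)
        exact mul_nonneg (Real.rpow_nonneg (hwnn ε ⟨hε0.le, hεR.le⟩) _)
          (Real.rpow_nonneg hε0.le _)
      have hφle : (∫ s in ε..R, φ s) ≤ 0 := by
        rw [hFTC, hFR]; linarith
      have hψint : IntervalIntegrable ψ volume ε R := by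
        apply ContinuousOn.intervalIntegrable
        rw [huIcc]; exact hψcont
      have hsub2' : Set.uIcc ε R ⊆ Set.uIcc (0:ℝ) R := by
        rw [huIcc, Set.uIcc_of_le hR.le]
        exact hsubε
      have hwpmεR : IntervalIntegrable (fun s => w s ^ p * s ^ m) volume ε R :=
        hJint.mono_set hsub2'
      have hsplit2 : (∫ s in ε..R, φ s)
          = (∫ s in ε..R, ψ s) + ∫ s in ε..R, w s ^ p * s ^ m := by
        rw [hφdef]
        exact intervalIntegral.integral_add hψint hwpmεR
      have h5 : (∫ s in ε..R, w s ^ p * s ^ m) ≤ - ∫ s in ε..R, ψ s := by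
        rw [hsplit2] at hφle; linarith
      have h8 : (∫ s in ε..R, |ψ s|)
          = ∫ s in ε..R, c * (w s ^ (p-1) * |g s| * s ^ (m+1)) := by
        apply intervalIntegral.integral_congr
        intro t ht
        rw [huIcc] at ht
        have ht0 : 0 ≤ w t := hwnn t (hsubε ht)
        have htx : (0:ℝ) ≤ t := (hε0.trans_le ht.1).le
        simp only [hψdef, abs_mul]
        rw [abs_of_nonneg hc0.le, abs_of_nonneg (Real.rpow_nonneg ht0 _),
          abs_of_nonneg (Real.rpow_nonneg htx _)]
      have h10 : (∫ s in ε..R, w s ^ (p-1) * |g s| * s ^ (m+1)) ≤ B := by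
        have hsub1 : Set.uIcc (0:ℝ) ε ⊆ Set.uIcc (0:ℝ) R := by
          rw [Set.uIcc_of_le hε0.le, Set.uIcc_of_le hR.le]
          exact Set.Icc_subset_Icc le_rfl hεR.le
        have hsub2 : Set.uIcc ε R ⊆ Set.uIcc (0:ℝ) R := by
          rw [huIcc, Set.uIcc_of_le hR.le]
          exact hsubε
        have hint0ε : IntervalIntegrable (fun s => w s ^ (p-1) * |g s| * s ^ (m+1))
            volume 0 ε := hintB.mono_set hsub1
        have hintεR : IntervalIntegrable (fun s => w s ^ (p-1) * |g s| * s ^ (m+1))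
            volume ε R := hintB.mono_set hsub2
        have hsum := intervalIntegral.integral_add_adjacent_intervals hint0ε hintεR
        have hposhead : 0 ≤ ∫ s in (0:ℝ)..ε, w s ^ (p-1) * |g s| * s ^ (m+1) := by
          refine intervalIntegral.integral_nonneg hε0.le (fun u hu => ?_)
          exact mul_nonneg (mul_nonneg
            (Real.rpow_nonneg (hwnn u ⟨hu.1, hu.2.trans hεR.le⟩) _) (abs_nonneg _))
            (Real.rpow_nonneg hu.1 _)
        rw [hBdef, ← hsum]
        linarith
      calc (∫ s in ε..R, w s ^ p * s ^ m) ≤ - ∫ s in ε..R, ψ s := h5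
        _ ≤ |∫ s in ε..R, ψ s| := neg_le_abs _
        _ ≤ ∫ s in ε..R, |ψ s| := intervalIntegral.abs_integral_le_integral_abs hεR.le
        _ = c * ∫ s in ε..R, w s ^ (p-1) * |g s| * s ^ (m+1) := by
            rw [h8, intervalIntegral.integral_const_mul]
        _ ≤ c * B := mul_le_mul_of_nonneg_left h10 hc0.le
    -- limit ε → 0⁺
    have hJε : ∀ ε ∈ Set.Ioo (0:ℝ) R,
        J ≤ w 0 ^ p * ε ^ (m+1) / (m+1) + c * B := by
      intro ε hε
      have hε0 : 0 < ε := hε.1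
      have hsub1 : Set.uIcc (0:ℝ) ε ⊆ Set.uIcc (0:ℝ) R := by
        rw [Set.uIcc_of_le hε0.le, Set.uIcc_of_le hR.le]
        exact Set.Icc_subset_Icc le_rfl hε.2.le
      have hsub2 : Set.uIcc ε R ⊆ Set.uIcc (0:ℝ) R := by
        rw [Set.uIcc_of_le hε.2.le, Set.uIcc_of_le hR.le]
        exact Set.Icc_subset_Icc hε0.le le_rfl
      have h0ε : IntervalIntegrable (fun s => w s ^ p * s ^ m) volume 0 ε :=
        hJint.mono_set hsub1
      have hεRint : IntervalIntegrable (fun s => w s ^ p * s ^ m) volume ε R :=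
        hJint.mono_set hsub2
      have hsum := intervalIntegral.integral_add_adjacent_intervals h0ε hεRint
      have hhead : (∫ s in (0:ℝ)..ε, w s ^ p * s ^ m)
          ≤ w 0 ^ p * ε ^ (m+1) / (m+1) := by
        have hmono3 : ∀ s ∈ Set.Icc (0:ℝ) ε, w s ^ p * s ^ m ≤ w 0 ^ p * s ^ m := by
          intro s hs
          have hsIcc : s ∈ Set.Icc (0:ℝ) R := ⟨hs.1, hs.2.trans hε.2.le⟩
          refine mul_le_mul_of_nonneg_right ?_ (Real.rpow_nonneg hs.1 _)
          exact Real.rpow_le_rpow (hwnn s hsIcc)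
            (hmono ⟨le_rfl, hR.le⟩ hsIcc hs.1) hp0.le
        have h2 := intervalIntegral.integral_mono_on hε0.le h0ε
          ((intervalIntegrable_rpow' hmneg).const_mul _) hmono3
        have h3 : (∫ s in (0:ℝ)..ε, w 0 ^ p * s ^ m)
            = w 0 ^ p * ((ε ^ (m+1) - (0:ℝ) ^ (m+1)) / (m+1)) := by
          rw [intervalIntegral.integral_const_mul, integral_rpow (Or.inl hmneg)]
        rw [Real.zero_rpow hm1ne, sub_zero] at h3
        rw [h3] at h2
        calc (∫ s in (0:ℝ)..ε, w s ^ p * s ^ m)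
            ≤ w 0 ^ p * (ε ^ (m+1) / (m+1)) := h2
          _ = w 0 ^ p * ε ^ (m+1) / (m+1) := by ring
      have := hIBP ε hε
      rw [hJdef, ← hsum]
      linarith
    have htend : Filter.Tendsto (fun ε => w 0 ^ p * ε ^ (m+1) / (m+1) + c * B)
        (nhdsWithin 0 (Set.Ioi 0)) (nhds (w 0 ^ p * 0 / (m+1) + c * B)) := by
      refine Filter.Tendsto.add (Filter.Tendsto.div_const
        (Filter.Tendsto.const_mul _ ?_) _) tendsto_const_nhds
      have hct : ContinuousAt (fun x : ℝ => x ^ (m+1)) 0 :=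
        Real.continuousAt_rpow_const 0 (m+1) (Or.inr (by rw [hm1]; exact hd.le))
      have := hct.tendsto
      rw [Real.zero_rpow hm1ne] at this
      exact this.mono_left nhdsWithin_le_nhds
    have hlim : J ≤ w 0 ^ p * 0 / (m+1) + c * B := by
      refine ge_of_tendsto htend ?_
      filter_upwards [Ioo_mem_nhdsGT_of_mem (Set.left_mem_Ico.2 hR)] with ε hε
      exact hJε ε hε
    rw [mul_zero, zero_div, zero_add] at hlim
    exact hlim.trans (mul_le_mul_of_nonneg_left hB hc0.le)
  have hJI : J ≤ c ^ p * I := by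
    rcases eq_or_lt_of_le hJ0 with h0 | hJpos
    · rw [← h0]; positivity
    · have hsplit : J ^ (1/p) * J ^ (1/p') = J := by
        rw [← Real.rpow_add hJpos, show 1/p + 1/p' = 1 from by
          rw [one_div, one_div]; exact hpq.inv_add_inv_eq_one, Real.rpow_one]
      have hstep : J ^ (1/p) ≤ c * I ^ (1/p) := by
        have hJp' : 0 < J ^ (1/p') := Real.rpow_pos_of_pos hJpos _
        have h2 : J ^ (1/p) * J ^ (1/p') ≤ (c * I ^ (1/p)) * J ^ (1/p') := by
          calc J ^ (1/p) * J ^ (1/p') = J := hsplit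
            _ ≤ c * (I ^ (1/p) * J ^ (1/p')) := hHardy
            _ = (c * I ^ (1/p)) * J ^ (1/p') := by ring
        exact le_of_mul_le_mul_right h2 hJp'
      have hfin := Real.rpow_le_rpow (Real.rpow_nonneg hJ0 _) hstep hp0.le
      rw [← Real.rpow_mul hJ0, Real.mul_rpow hc0.le (Real.rpow_nonneg hI0 _),
        ← Real.rpow_mul hI0, one_div, inv_mul_cancel₀ hp0.ne',
        Real.rpow_one, Real.rpow_one] at hfin
      exact hfin
  -- main comparison
  set A := Kα ^ (P - p) * I ^ ((P - p)/p) with hAdef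
  have hA0 : 0 ≤ A :=
    mul_nonneg (Real.rpow_nonneg hKα0.le _) (Real.rpow_nonneg hI0 _)
  have hLA : (∫ s in (0:ℝ)..R, w s ^ P * s ^ (n - 1)) ≤ A * J := by
    have hLint : IntervalIntegrable (fun s => w s ^ P * s ^ (n-1)) volume 0 R := by
      apply ContinuousOn.intervalIntegrable
      rw [Set.uIcc_of_le hR.le]
      exact (hwc.rpow_const fun x _ => Or.inr hP0.le).mul
        (continuousOn_id.rpow_const fun x _ => Or.inr hn1.le)
    have hAJint : IntervalIntegrable (fun s => A * (w s ^ p * s ^ m)) volume 0 R :=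
      hJint.const_mul A
    have hmono2 : ∀ s ∈ Set.Icc (0:ℝ) R, w s ^ P * s ^ (n-1) ≤ A * (w s ^ p * s ^ m) := by
      intro s hsIcc
      rcases eq_or_lt_of_le hsIcc.1 with hs0 | hs0
      · rw [← hs0, Real.zero_rpow (ne_of_gt hn1), mul_zero]
        exact mul_nonneg hA0 (mul_nonneg
          (Real.rpow_nonneg (hwnn 0 ⟨le_rfl, hR.le⟩) _) (Real.rpow_nonneg le_rfl _))
      · have hsIoc : s ∈ Set.Ioc 0 R := ⟨hs0, hsIcc.2⟩
        rcases eq_or_lt_of_le (hwnn s hsIcc) with hws0 | hws0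
        · rw [← hws0, Real.zero_rpow (ne_of_gt hP0), Real.zero_rpow (ne_of_gt hp0),
            zero_mul, zero_mul, mul_zero]
        · have hws := hpt s hsIoc
          have hsplit : w s ^ P = w s ^ (P - p) * w s ^ p := by
            rw [← Real.rpow_add hws0]; congr 1; ring
          have hbound : w s ^ (P - p) ≤ (Kα * I ^ (1/p) * s ^ (-((n - (p + q))/p))) ^ (P - p) :=
            Real.rpow_le_rpow (hwnn s hsIcc) hws hPp.le
          have he1 : 1/p*(P-p) = (P-p)/p := by ring
          have he2 : -((n - (p + q))/p)*(P-p) = -(p+q) := by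
            rw [hPsub]; field_simp
          have hexpand : (Kα * I ^ (1/p) * s ^ (-((n - (p + q))/p))) ^ (P - p)
              = A * s ^ (-(p+q)) := by
            rw [Real.mul_rpow (mul_nonneg hKα0.le (Real.rpow_nonneg hI0 _))
                (Real.rpow_nonneg hs0.le _),
              Real.mul_rpow hKα0.le (Real.rpow_nonneg hI0 _),
              ← Real.rpow_mul hI0, ← Real.rpow_mul hs0.le, he1, he2, hAdef]
          have hm2 : -(p+q) + (n-1) = m := by rw [hmdef]; ring
          calc w s ^ P * s ^ (n-1) = (w s ^ (P-p)) * (w s ^ p * s ^ (n-1)) := by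
                rw [hsplit]; ring
            _ ≤ (A * s ^ (-(p+q))) * (w s ^ p * s ^ (n-1)) := by
                refine mul_le_mul_of_nonneg_right (hbound.trans_eq hexpand) ?_
                exact mul_nonneg (Real.rpow_nonneg hws0.le _) (Real.rpow_nonneg hs0.le _)
            _ = A * (w s ^ p * (s ^ (-(p+q)) * s ^ (n-1))) := by ring
            _ = A * (w s ^ p * s ^ m) := by rw [← Real.rpow_add hs0, hm2]
    calc (∫ s in (0:ℝ)..R, w s ^ P * s^(n-1))
        ≤ ∫ s in (0:ℝ)..R, A * (w s ^ p * s ^ m) :=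
          intervalIntegral.integral_mono_on hR.le hLint hAJint hmono2
      _ = A * J := by rw [hJdef, ← intervalIntegral.integral_const_mul]
  -- conclusion
  have hL0 : 0 ≤ ∫ s in (0:ℝ)..R, w s ^ P * s ^ (n - 1) := by
    refine intervalIntegral.integral_nonneg hR.le (fun u hu => ?_)
    exact mul_nonneg (Real.rpow_nonneg (hwnn u hu) _) (Real.rpow_nonneg hu.1 _)
  have hfinal : (∫ s in (0:ℝ)..R, w s ^ P * s ^ (n - 1)) ≤ C₀ * I ^ (P/p) := by
    calc (∫ s in (0:ℝ)..R, w s ^ P * s ^ (n - 1)) ≤ A * J := hLA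
      _ ≤ A * (c ^ p * I) := by
          exact mul_le_mul_of_nonneg_left hJI hA0
      _ = C₀ * (I ^ ((P - p)/p) * I ^ (1:ℝ)) := by
          rw [hAdef, hC₀def, Real.rpow_one]; ring
      _ = C₀ * I ^ (P/p) := by
          have hPE : (P - p)/p + 1 = P/p := by field_simp; ring
          rw [← Real.rpow_add' hI0 (by rw [hPE]; positivity), hPE]
  have hexp : (n - (p + q)) / (n * p) = 1 / P := by
    rw [hPdef, one_div_div]
  rw [hexp]
  calc (∫ s in (0:ℝ)..R, w s ^ P * s ^ (n - 1)) ^ (1/P)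
      ≤ (C₀ * I ^ (P/p)) ^ (1/P) :=
        Real.rpow_le_rpow hL0 hfinal (by positivity)
    _ = C₀ ^ (1/P) * I ^ (1/p) := by
        rw [Real.mul_rpow hC₀.le (Real.rpow_nonneg hI0 _),
          ← Real.rpow_mul hI0,
          show P / p * (1/P) = 1/p by field_simp [hP0.ne', hp0.ne']]
end
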